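/- Let c ≥ 0 and K ≥ 1 be integers. Let Λ₀ be a real (c+1)×(c+1) matrix, let Λ_{−k}, for integers k ≥ 1, be real (c+1)×(c+1) matrices with nonnegative entries such that Σ_{k=1}^∞ ‖Λ_{−k}‖ < ∞, and let λ₁,…,λ_K ≥ 0 with Λ_i = λ_i·I for i = 1,…,K (Assumption 6.1). Let J ≥ 1, and for j = 1,…,J let γ_j ∈ ℂ, β_j ∈ ℂ with 0 < |β_j| < 1, and row vectors ω_j ∈ ℂ^{c+1} satisfying the characteristic relation ω_j·(Σ_{n=0}^{K} β_j^{n} Λ_{K−n} + β_j^{K} Σ_{n=1}^{∞} β_j^{n} Λ_{−n}) = 0. Let F_{n}: [0,∞) → ℝ^{c+1}, for n ∈ ℕ, be differentiable column-vector-valued functions with 0 ≤ F_n(t) ≤ 1 componentwise, F_n(0) = 𝟙 (the all-ones vector), satisfying the backward Kolmogorov equations F_n′(t) = Σ_{i=0}^{K} Λ_i F_n(t) + Σ_{k=1}^{n} Λ_{−k} F_{n−k}(t) for all n ∈ ℕ and t ≥ 0. Then for all t ≥ 0: Σ_{j=1}^{J} γ_j · ω_j · (Σ_{n=0}^{∞}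 β_j^{n} F_n(t)) = Σ_{j=1}^{J} (γ_j · ω_j 𝟙 / (1−β_j)) · exp( t · Σ_{i=1}^{K} (1 − β_j^{−i}) λ_i ). -/

import Mathlib

open scoped BigOperators
open Finset

theorem stmt12 (c K : ℕ) (hK : 1 ≤ K)
    (Λ₀ : Matrix (Fin (c + 1)) (Fin (c + 1)) ℝ)
    (Λm : ℕ → Matrix (Fin (c + 1)) (Fin (c + 1)) ℝ)
    (hΛnn : ∀ k, 1 ≤ k → ∀ p q, 0 ≤ Λm k p q)
    (hΛsum : ∀ p q, Summable (fun k : ℕ => Λm k p q))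
    (lam : ℕ → ℝ) (hlam : ∀ i, 0 ≤ lam i)
    (J : ℕ) (hJ : 1 ≤ J)
    (γ : Fin J → ℂ) (β : Fin J → ℂ)
    (hβpos : ∀ j, 0 < ‖β j‖) (hβlt : ∀ j, ‖β j‖ < 1)
    (ω : Fin J → Fin (c + 1) → ℂ)
    (hchar : ∀ (j : Fin J) (q : Fin (c + 1)),
      (∑ n ∈ Finset.range K, β j ^ n * (lam (K - n) : ℂ)) * ω j q
        + β j ^ K * (∑ p, ω j p * (Λ₀ p q : ℂ))
        + β j ^ K * ∑' n : ℕ, β j ^ (n + 1) * ∑ p, ω j p * (Λm (n + 1) p q : ℂ) = 0)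
    (F : ℕ → ℝ → Fin (c + 1) → ℝ)
    (hF0 : ∀ n m, F n 0 m = 1)
    (hFnn : ∀ n t m, 0 ≤ t → 0 ≤ F n t m)
    (hFle : ∀ n t m, 0 ≤ t → F n t m ≤ 1)
    (hFode : ∀ (n : ℕ) (t : ℝ) (m : Fin (c + 1)), 0 ≤ t →
      HasDerivAt (fun s => F n s m)
        (Λ₀.mulVec (F n t) m + (∑ i ∈ Finset.Icc 1 K, lam i) * F n t m
          + ∑ k ∈ Finset.Icc 1 n, (Λm k).mulVec (F (n - k) t) m) t) :
    ∀ t : ℝ, 0 ≤ t →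
      ∑ j : Fin J, γ j * ∑' n : ℕ, β j ^ n * ∑ m, ω j m * (F n t m : ℂ)
        = ∑ j : Fin J, γ j * (∑ m, ω j m) / (1 - β j)
            * Complex.exp ((t : ℂ) * ∑ i ∈ Finset.Icc 1 K,
                (1 - (β j)⁻¹ ^ i) * (lam i : ℂ)) := by
  intro t ht
  refine Finset.sum_congr rfl fun j _ => ?_
  set b : ℂ := β j with hbdef
  set w : Fin (c + 1) → ℂ := ω j with hwdef
  have hb0 : b ≠ 0 := by
    have h := hβpos j
    simp only [← hbdef] at h
    exact fun hc => by simp [hc] at h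
  have hblt : ‖b‖ < 1 := by simpa [← hbdef] using hβlt j
  have hb1 : (1 : ℂ) - b ≠ 0 := by
    intro h
    have hb' : b = 1 := by linear_combination -h
    rw [hb'] at hblt; norm_num at hblt
  -- constants
  set L : ℝ := ∑ i ∈ Finset.Icc 1 K, lam i with hLdef
  have hL0 : 0 ≤ L := Finset.sum_nonneg fun i _ => hlam i
  set μ : ℂ := ∑ i ∈ Finset.Icc 1 K, (1 - b⁻¹ ^ i) * (lam i : ℂ) with hμdef
  set C : ℝ := ∑ m, ‖w m‖ with hCdef
  -- shifted matrix sums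
  have hΛshift : ∀ p q, Summable (fun k : ℕ => Λm (k + 1) p q) :=
    fun p q => (summable_nat_add_iff 1).mpr (hΛsum p q)
  set A : Fin (c + 1) → Fin (c + 1) → ℝ := fun p q => ∑' k : ℕ, Λm (k + 1) p q with hAdef
  have hA0 : ∀ p q, 0 ≤ A p q := fun p q =>
    tsum_nonneg fun k => hΛnn (k + 1) (by omega) p q
  have hApart : ∀ p q n, ∑ k ∈ Finset.Icc 1 n, Λm k p q ≤ A p q := by
    intro p q n
    rw [show Finset.Icc 1 n = Finset.Ico 1 (n + 1) by rfl, Finset.sum_Ico_eq_sum_range]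
    simp only [add_comm 1]
    exact Summable.sum_le_tsum (Finset.range (n + 1 - 1)) (fun k _ => hΛnn (k + 1) (by omega) p q)
      (hΛshift p q)
  -- series terms
  set d : ℕ → ℝ → Fin (c + 1) → ℝ := fun n s m =>
    Λ₀.mulVec (F n s) m + L * F n s m
      + ∑ k ∈ Finset.Icc 1 n, (Λm k).mulVec (F (n - k) s) m with hddef
  set f : ℕ → ℝ → ℂ := fun n s => b ^ n * ∑ m, w m * (F n s m : ℂ) with hfdef
  set f' : ℕ → ℝ → ℂ := fun n s => b ^ n * ∑ m, w m * (d n s m : ℂ) with hf'def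
  have hderiv : ∀ n s, 0 ≤ s → HasDerivAt (fun y => f n y) (f' n s) s := by
    intro n s hs
    have h2 : HasDerivAt (fun y => ∑ m, w m * ((F n y m : ℝ) : ℂ))
        (∑ m, w m * (d n s m : ℂ)) s :=
      HasDerivAt.fun_sum fun m _ => ((hFode n s m hs).ofReal_comp).const_mul (w m)
    simpa [hfdef, hf'def] using h2.const_mul (b ^ n)
  have hFabs : ∀ n s (m : Fin (c + 1)), 0 ≤ s → |F n s m| ≤ 1 := fun n s m hs =>
    abs_le.mpr ⟨by linarith [hFnn n s m hs], hFle n s m hs⟩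
  have hfb : ∀ n s, 0 ≤ s → ‖f n s‖ ≤ ‖b‖ ^ n * C := by
    intro n s hs
    rw [hfdef]
    simp only [norm_mul, norm_pow]
    refine mul_le_mul_of_nonneg_left ?_ (by positivity)
    refine (norm_sum_le _ _).trans ?_
    rw [hCdef]
    refine Finset.sum_le_sum fun m _ => ?_
    rw [norm_mul, Complex.norm_real, Real.norm_eq_abs]
    exact mul_le_of_le_one_right (norm_nonneg _) (hFabs n s m hs)
  set R : Fin (c + 1) → ℝ := fun m => (∑ q, |Λ₀ m q|) + L + ∑ q, A m q with hRdef
  have hdb : ∀ n s (m : Fin (c + 1)), 0 ≤ s → |d n s m| ≤ R m := by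
    intro n s m hs
    have h1 : |Λ₀.mulVec (F n s) m| ≤ ∑ q, |Λ₀ m q| := by
      rw [Matrix.mulVec, dotProduct]
      refine (Finset.abs_sum_le_sum_abs _ _).trans (Finset.sum_le_sum fun q _ => ?_)
      rw [abs_mul]
      exact mul_le_of_le_one_right (abs_nonneg _) (hFabs n s q hs)
    have h2 : |L * F n s m| ≤ L := by
      rw [abs_mul, abs_of_nonneg hL0]
      exact mul_le_of_le_one_right hL0 (hFabs n s m hs)
    have h3 : |∑ k ∈ Finset.Icc 1 n, (Λm k).mulVec (F (n - k) s) m| ≤ ∑ q, A m q := by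
      refine (Finset.abs_sum_le_sum_abs _ _).trans ?_
      have step : ∀ k ∈ Finset.Icc 1 n, |(Λm k).mulVec (F (n - k) s) m| ≤ ∑ q, Λm k m q := by
        intro k hk
        rw [Matrix.mulVec, dotProduct]
        refine (Finset.abs_sum_le_sum_abs _ _).trans (Finset.sum_le_sum fun q _ => ?_)
        rw [abs_mul, abs_of_nonneg (hΛnn k (Finset.mem_Icc.mp hk).1 m q)]
        exact mul_le_of_le_one_right (hΛnn k (Finset.mem_Icc.mp hk).1 m q) (hFabs _ s q hs)
      refine (Finset.sum_le_sum step).trans ?_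
      rw [Finset.sum_comm]
      exact Finset.sum_le_sum fun q _ => hApart m q n
    have habc : |d n s m| ≤ |Λ₀.mulVec (F n s) m| + |L * F n s m|
          + |∑ k ∈ Finset.Icc 1 n, (Λm k).mulVec (F (n - k) s) m| := by
      rw [hddef]
      exact (abs_add_le _ _).trans (add_le_add (abs_add_le _ _) le_rfl)
    simp only [hRdef]
    linarith
  set D : ℝ := ∑ m, ‖w m‖ * R m with hDdef
  have hf'b : ∀ n s, 0 ≤ s → ‖f' n s‖ ≤ ‖b‖ ^ n * D := by
    intro n s hs
    rw [hf'def]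
    simp only [norm_mul, norm_pow]
    refine mul_le_mul_of_nonneg_left ?_ (by positivity)
    refine (norm_sum_le _ _).trans ?_
    rw [hDdef]
    refine Finset.sum_le_sum fun m _ => ?_
    rw [norm_mul, Complex.norm_real, Real.norm_eq_abs]
    exact mul_le_mul_of_nonneg_left (hdb n s m hs) (norm_nonneg _)
  have hgeo : Summable (fun n : ℕ => ‖b‖ ^ n) :=
    summable_geometric_of_lt_one (norm_nonneg b) hblt
  have hu : Summable (fun n : ℕ => ‖b‖ ^ n * D) := hgeo.mul_right D
  have hsumf : ∀ s, 0 ≤ s → Summable (fun n => f n s) := fun s hs =>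
    Summable.of_norm_bounded (hgeo.mul_right C) (fun n => hfb n s hs)
  set g : ℝ → ℂ := fun s => ∑' n, f n s with hgdef
  have hgd : ∀ s, 0 < s → HasDerivAt g (∑' n, f' n s) s := fun s hs =>
    hasDerivAt_tsum_of_isPreconnected hu isOpen_Ioi (convex_Ioi (0 : ℝ)).isPreconnected
      (fun n y hy => hderiv n y (le_of_lt hy)) (fun n y hy => hf'b n y (le_of_lt hy))
      hs (hsumf s (le_of_lt hs)) hs
  -- the algebraic identity: the derivative series equals μ * g s
  have halg : ∀ s : ℝ, 0 ≤ s → ∑' n, f' n s = μ * g s := by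
    intro s hs
    set Gq : Fin (c + 1) → ℂ := fun q => ∑' l : ℕ, b ^ l * (F l s q : ℂ) with hGqdef
    have hGnorm : ∀ q, Summable fun l : ℕ => ‖b ^ l * (F l s q : ℂ)‖ := by
      intro q
      refine Summable.of_nonneg_of_le (fun l => norm_nonneg _) (fun l => ?_) hgeo
      rw [norm_mul, norm_pow, Complex.norm_real, Real.norm_eq_abs]
      exact mul_le_of_le_one_right (by positivity) (hFabs l s q hs)
    have hGsum : ∀ q, Summable fun l : ℕ => b ^ l * (F l s q : ℂ) :=
      fun q => (hGnorm q).of_norm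
    set P0 : Fin (c + 1) → ℂ := fun q => ∑ p, w p * (Λ₀ p q : ℂ) with hP0def
    set Aq : Fin (c + 1) → ℕ → ℂ := fun q k =>
      if k = 0 then 0 else b ^ k * ∑ p, w p * (Λm k p q : ℂ) with hAqdef
    have hAbd : ∀ q k, ‖Aq q k‖ ≤ ∑ p, ‖w p‖ * |Λm k p q| := by
      intro q k
      rcases Nat.eq_zero_or_pos k with hk | hk
      · simp only [hAqdef, hk, if_pos rfl, norm_zero]
        exact Finset.sum_nonneg fun p _ => by positivity
      · simp only [hAqdef, if_neg hk.ne']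
        rw [norm_mul, norm_pow]
        refine (mul_le_of_le_one_left (norm_nonneg _)
          (pow_le_one₀ (norm_nonneg b) hblt.le)).trans ?_
        refine (norm_sum_le _ _).trans (Finset.sum_le_sum fun p _ => ?_)
        rw [norm_mul, Complex.norm_real, Real.norm_eq_abs]
    have hAnorm : ∀ q, Summable fun k : ℕ => ‖Aq q k‖ := by
      intro q
      refine Summable.of_nonneg_of_le (fun k => norm_nonneg _) (hAbd q) ?_
      exact summable_sum fun p _ => ((hΛsum p q).abs.mul_left ‖w p‖)
    have hAsum : ∀ q, Summable fun k : ℕ => Aq q k := fun q => (hAnorm q).of_norm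
    have hC1 : ∀ q, (∑' k, Aq q k) * Gq q
        = ∑' n : ℕ, ∑ k ∈ Finset.range (n + 1), Aq q k * (b ^ (n - k) * (F (n - k) s q : ℂ)) :=
      fun q => tsum_mul_tsum_eq_tsum_sum_range_of_summable_norm (hAnorm q) (hGnorm q)
    have hCsum : ∀ q, Summable fun n : ℕ =>
        ∑ k ∈ Finset.range (n + 1), Aq q k * (b ^ (n - k) * (F (n - k) s q : ℂ)) :=
      fun q => (summable_norm_sum_mul_range_of_summable_norm (hAnorm q) (hGnorm q)).of_norm
    -- termwise decomposition of f' n s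
    have hT1 : ∀ n : ℕ, b ^ n * ∑ m, w m * ((Λ₀.mulVec (F n s) m : ℝ) : ℂ)
        = ∑ q, P0 q * (b ^ n * (F n s q : ℂ)) := by
      intro n
      simp only [Matrix.mulVec, dotProduct, hP0def]
      push_cast
      rw [Finset.mul_sum]
      simp_rw [Finset.mul_sum, Finset.sum_mul]
      rw [Finset.sum_comm]
      exact Finset.sum_congr rfl fun q _ => Finset.sum_congr rfl fun m _ => by ring
    have hT2 : ∀ n : ℕ, b ^ n * ∑ m, w m * ((L * F n s m : ℝ) : ℂ) = (L : ℂ) * f n s := by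
      intro n
      simp only [hfdef]
      push_cast
      rw [Finset.mul_sum, Finset.mul_sum, Finset.mul_sum]
      exact Finset.sum_congr rfl fun m _ => by ring
    have hT3 : ∀ n : ℕ, b ^ n * ∑ m, w m
          * ((∑ k ∈ Finset.Icc 1 n, (Λm k).mulVec (F (n - k) s) m : ℝ) : ℂ)
        = ∑ q, ∑ k ∈ Finset.range (n + 1), Aq q k * (b ^ (n - k) * (F (n - k) s q : ℂ)) := by
      intro n
      have e1 : ∀ q : Fin (c + 1),
          ∑ k ∈ Finset.range (n + 1), Aq q k * (b ^ (n - k) * (F (n - k) s q : ℂ))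
          = ∑ k ∈ Finset.Icc 1 n, b ^ n * ((∑ p, w p * (Λm k p q : ℂ)) * (F (n - k) s q : ℂ)) := by
        intro q
        have hsub : Finset.Icc 1 n ⊆ Finset.range (n + 1) := fun x hx =>
          Finset.mem_range.mpr (by have := (Finset.mem_Icc.mp hx).2; omega)
        have hzero : ∀ x ∈ Finset.range (n + 1), x ∉ Finset.Icc 1 n →
            Aq q x * (b ^ (n - x) * (F (n - x) s q : ℂ)) = 0 := by
          intro x hx hnx
          have hx0 : x = 0 := by
            rcases Nat.eq_zero_or_pos x with h | h
            · exact h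
            · exact absurd (Finset.mem_Icc.mpr ⟨h, by have := Finset.mem_range.mp hx; omega⟩) hnx
          simp [hAqdef, hx0]
        rw [← Finset.sum_subset hsub hzero]
        refine Finset.sum_congr rfl fun k hk => ?_
        obtain ⟨hk1, hk2⟩ := Finset.mem_Icc.mp hk
        simp only [hAqdef, if_neg (by omega : ¬ k = 0)]
        rw [show b ^ k * (∑ p, w p * (Λm k p q : ℂ)) * (b ^ (n - k) * (F (n - k) s q : ℂ))
            = b ^ k * b ^ (n - k) * ((∑ p, w p * (Λm k p q : ℂ)) * (F (n - k) s q : ℂ)) by ring,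
          pow_mul_pow_sub b hk2]
      rw [show (∑ q, ∑ k ∈ Finset.range (n + 1), Aq q k * (b ^ (n - k) * (F (n - k) s q : ℂ)))
          = ∑ q, ∑ k ∈ Finset.Icc 1 n, b ^ n * ((∑ p, w p * (Λm k p q : ℂ)) * (F (n - k) s q : ℂ))
          from Finset.sum_congr rfl fun q _ => e1 q]
      simp only [Matrix.mulVec, dotProduct]
      push_cast
      simp_rw [Finset.mul_sum, Finset.sum_mul]
      refine Finset.sum_comm.trans ?_
      refine (Finset.sum_congr rfl fun k _ => Finset.sum_comm).trans ?_
      refine Finset.sum_comm.trans ?_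
      refine Finset.sum_congr rfl fun q _ => Finset.sum_congr rfl fun k _ => ?_
      rw [Finset.mul_sum]
      exact Finset.sum_congr rfl fun m _ => by ring
    have key : ∀ n : ℕ, f' n s
        = (∑ q, (P0 q * (b ^ n * (F n s q : ℂ))
            + ∑ k ∈ Finset.range (n + 1), Aq q k * (b ^ (n - k) * (F (n - k) s q : ℂ))))
          + (L : ℂ) * f n s := by
      intro n
      have e : f' n s = b ^ n * ∑ m, w m * ((Λ₀.mulVec (F n s) m : ℝ) : ℂ)
          + b ^ n * ∑ m, w m * ((L * F n s m : ℝ) : ℂ)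
          + b ^ n * ∑ m, w m
              * ((∑ k ∈ Finset.Icc 1 n, (Λm k).mulVec (F (n - k) s) m : ℝ) : ℂ) := by
        simp only [hf'def, hddef]
        push_cast
        simp only [mul_add, Finset.sum_add_distrib, Finset.mul_sum]
      rw [e, hT1, hT2, hT3, Finset.sum_add_distrib]
      ring
    -- summabilities for the pieces
    have hS1 : ∀ q, Summable fun n : ℕ => P0 q * (b ^ n * (F n s q : ℂ)) :=
      fun q => (hGsum q).mul_left _
    have hSq : ∀ q : Fin (c + 1), Summable fun n : ℕ => P0 q * (b ^ n * (F n s q : ℂ))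
        + ∑ k ∈ Finset.range (n + 1), Aq q k * (b ^ (n - k) * (F (n - k) s q : ℂ)) :=
      fun q => (hS1 q).add (hCsum q)
    have hQsum : Summable fun n : ℕ => ∑ q, (P0 q * (b ^ n * (F n s q : ℂ))
        + ∑ k ∈ Finset.range (n + 1), Aq q k * (b ^ (n - k) * (F (n - k) s q : ℂ))) :=
      summable_sum fun q _ => hSq q
    -- compute the tsum
    have step1 : ∑' n, f' n s
        = (∑ q, (P0 q * Gq q + (∑' k, Aq q k) * Gq q)) + (L : ℂ) * g s := by
      rw [tsum_congr key, Summable.tsum_add hQsum ((hsumf s hs).mul_left _), tsum_mul_left,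
        Summable.tsum_finsetSum fun q _ => hSq q]
      congr 1
      refine Finset.sum_congr rfl fun q _ => ?_
      rw [Summable.tsum_add (hS1 q) (hCsum q), tsum_mul_left, hC1 q]
    -- use the characteristic equation
    set S : ℂ := ∑ i ∈ Finset.Icc 1 K, b⁻¹ ^ i * (lam i : ℂ) with hSdef
    have hbK : b ^ K ≠ 0 := pow_ne_zero _ hb0
    have hPT : ∀ q, P0 q + (∑' k, Aq q k) = -S * w q := by
      intro q
      have hTq : (∑' k, Aq q k) = ∑' n : ℕ, b ^ (n + 1) * ∑ p, w p * (Λm (n + 1) p q : ℂ) := by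
        rw [Summable.tsum_eq_zero_add (hAsum q)]
        simp [hAqdef]
      have h0 := hchar j q
      rw [← hbdef, ← hwdef] at h0
      have hEK : (∑ n ∈ Finset.range K, b ^ n * (lam (K - n) : ℂ)) = S * b ^ K := by
        rw [hSdef, Finset.sum_mul]
        refine Finset.sum_nbij' (fun n => K - n) (fun i => K - i) ?_ ?_ ?_ ?_ ?_
        · intro a ha
          have h := Finset.mem_range.mp ha
          simp only [Finset.mem_Icc]
          omega
        · intro a ha
          have h := Finset.mem_Icc.mp ha
          simp only [Finset.mem_range]
          omega
        · intro a ha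
          have h := Finset.mem_range.mp ha
          omega
        · intro a ha
          have h := Finset.mem_Icc.mp ha
          omega
        · intro a ha
          have haK : a < K := Finset.mem_range.mp ha
          rw [inv_pow, pow_sub₀ b hb0 (by omega : a ≤ K)]
          field_simp
      rw [hEK] at h0
      rw [hTq]
      refine mul_left_cancel₀ hbK ?_
      linear_combination h0
    -- g s as a combination of the Gq
    have hgG : g s = ∑ q, w q * Gq q := by
      simp only [hgdef]
      have : ∀ n : ℕ, f n s = ∑ m, w m * (b ^ n * (F n s m : ℂ)) := by
        intro n
        simp only [hfdef]
        rw [Finset.mul_sum]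
        exact Finset.sum_congr rfl fun m _ => by ring
      rw [tsum_congr this, Summable.tsum_finsetSum fun m _ => ((hGsum m).mul_left (w m))]
      exact Finset.sum_congr rfl fun m _ => tsum_mul_left
    have hμ' : μ = (L : ℂ) - S := by
      rw [hμdef, hSdef, hLdef]
      push_cast
      rw [← Finset.sum_sub_distrib]
      exact Finset.sum_congr rfl fun i _ => by ring
    rw [step1, hgG]
    rw [show (∑ q, (P0 q * Gq q + (∑' k, Aq q k) * Gq q))
        = ∑ q, (-S * w q) * Gq q from Finset.sum_congr rfl fun q _ => by
          rw [← add_mul, hPT q]]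
    rw [hμ']
    rw [Finset.mul_sum, Finset.mul_sum, ← Finset.sum_add_distrib]
    exact Finset.sum_congr rfl fun q _ => by ring
  -- value at 0
  set W : ℂ := ∑ m, w m with hWdef
  have hg0 : g 0 = (1 - b)⁻¹ * W := by
    simp only [hgdef, hfdef]
    have e0 : ∀ n : ℕ, b ^ n * ∑ m, w m * ((F n 0 m : ℝ) : ℂ) = b ^ n * W := by
      intro n
      congr 1
      rw [hWdef]
      exact Finset.sum_congr rfl fun m _ => by rw [hF0 n m]; simp
    rw [tsum_congr e0, tsum_mul_right, tsum_geometric_of_norm_lt_one hblt]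
  -- continuity of g on [0, ∞)
  have hgcont : ContinuousOn g (Set.Ici (0 : ℝ)) := by
    refine continuousOn_tsum (fun n => ?_) (hgeo.mul_right C) (fun n x hx => hfb n x hx)
    intro x hx
    exact ((hderiv n x hx).continuousAt).continuousWithinAt
  -- solve the ODE
  have hclaim : g t = (1 - b)⁻¹ * W * Complex.exp (μ * t) := by
    rcases eq_or_lt_of_le ht with h0 | hpos
    · rw [← h0]
      simp [hg0]
    · set φ : ℝ → ℂ := fun s => g s * Complex.exp (-(μ * s)) with hφdef
      have hφd : ∀ s : ℝ, 0 < s → HasDerivAt φ 0 s := by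
        intro s hs
        have h1 : HasDerivAt g (μ * g s) s := by
          have h := hgd s hs
          rwa [halg s hs.le] at h
        have hlin : HasDerivAt (fun y : ℝ => -(μ * (y : ℂ))) (-μ) s := by
          have h := ((hasDerivAt_id s).ofReal_comp).const_mul (-μ)
          simp only [mul_one, Complex.ofReal_one, id] at h
          simpa only [neg_mul] using h
        have h2 := hlin.cexp
        have h3 := h1.mul h2
        have : μ * g s * Complex.exp (-(μ * (s : ℂ)))
            + g s * (Complex.exp (-(μ * (s : ℂ))) * -μ) = 0 := by ring
        rw [this] at h3
        exact h3
      have hconst : ∀ a : ℝ, a ∈ Set.Ioc 0 t → φ t = φ a := by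
        intro a ha
        have h := constant_of_has_deriv_right_zero (f := φ) (a := a) (b := t)
          (fun x hx => ((hφd x (lt_of_lt_of_le ha.1 hx.1)).continuousAt).continuousWithinAt)
          (fun x hx => (hφd x (lt_of_lt_of_le ha.1 hx.1)).hasDerivWithinAt)
        exact h t (Set.right_mem_Icc.mpr ha.2)
      have hφcont : ContinuousWithinAt φ (Set.Ici (0 : ℝ)) 0 := by
        refine ContinuousWithinAt.mul (hgcont 0 Set.self_mem_Ici) ?_
        exact (Complex.continuous_exp.comp
          ((continuous_const.mul Complex.continuous_ofReal).neg)).continuousWithinAt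
      have h1 : Filter.Tendsto φ (nhdsWithin 0 (Set.Ioi 0)) (nhds (φ 0)) :=
        hφcont.tendsto.mono_left (nhdsWithin_mono 0 Set.Ioi_subset_Ici_self)
      have h2 : Filter.Tendsto φ (nhdsWithin 0 (Set.Ioi 0)) (nhds (φ t)) := by
        refine Filter.Tendsto.congr' ?_ tendsto_const_nhds
        filter_upwards [Ioo_mem_nhdsGT_of_mem (Set.mem_Ico.mpr ⟨le_refl (0 : ℝ), hpos⟩)]
          with x hx
        exact hconst x ⟨hx.1, hx.2.le⟩
      have hφeq : φ 0 = φ t := tendsto_nhds_unique h1 h2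
      have hμt : g 0 = g t * Complex.exp (-(μ * t)) := by
        have := hφeq
        simp only [hφdef, Complex.ofReal_zero, mul_zero, neg_zero, Complex.exp_zero,
          mul_one] at this
        exact this
      rw [hg0] at hμt
      calc g t = g t * Complex.exp (-(μ * (t : ℂ))) * Complex.exp (μ * (t : ℂ)) := by
            rw [mul_assoc, ← Complex.exp_add]
            simp
        _ = (1 - b)⁻¹ * W * Complex.exp (μ * (t : ℂ)) := by rw [← hμt]
  -- conclude
  have final : γ j * g t = γ j * W / (1 - b) * Complex.exp ((t : ℂ) * μ) := by
    rw [hclaim, mul_comm ((t : ℂ)) μ, div_eq_mul_inv]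
    ring
  exact final
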